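/- Let α ≥ 1 and k ≥ 1 an integer. If α satisfies the equation (1 + α/k)^{k − ⌈k/α⌉} · (α/k) · ⌈k/α⌉ = ρ for some ρ ≥ 1, then 1 + ln ρ ≤ α ≤ 1 + ln ρ − ln(1 − α²/k), provided α² < k. In particular, as k → ∞ with ρ fixed, any such α converges to 1 + ln ρ. -/

import Mathlib

private lemma stmt_6_aux (k α : ℝ) (hk0 : 0 < k) (hα0 : 0 < α) (hα : 1 ≤ α)
    (hαk : α ^ 2 < k) :
    α - 1 - α ^ 2 / k ≤ (k - k / α) * ((α / k) / (1 + α / k)) := by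
  have hd : (k - k / α) * ((α / k) / (1 + α / k)) = (α - 1) * k / (k + α) := by
    field_simp
  have hkα : (0:ℝ) < k + α := by linarith
  rw [hd, le_div_iff₀ hkα]
  have h2 : α ^ 2 / k * k = α ^ 2 := by field_simp
  have h3 : 0 ≤ α ^ 2 / k := by positivity
  nlinarith [h2, h3]

/-- if `α ≥ 1` satisfies `(1+α/k)^{k−⌈k/α⌉}·(α/k)·⌈k/α⌉ = ρ` with `ρ ≥ 1`
and `α² < k`, then `1 + ln ρ ≤ α ≤ 1 + ln ρ − ln(1 − α²/k)`. -/
theorem stmt_6 (k : ℕ) (hk : 1 ≤ k) (α ρ : ℝ) (hα : 1 ≤ α) (hρ : 1 ≤ ρ)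
    (hαk : α ^ 2 < k)
    (heq : (1 + α / k) ^ ((k : ℝ) - (⌈(k : ℝ) / α⌉ : ℝ)) * (α / k) * (⌈(k : ℝ) / α⌉ : ℝ)
      = ρ) :
    1 + Real.log ρ ≤ α ∧ α ≤ 1 + Real.log ρ - Real.log (1 - α ^ 2 / k) := by
  have hkR : (1 : ℝ) ≤ (k : ℝ) := by exact_mod_cast hk
  have hk0 : (0 : ℝ) < k := by linarith
  have hα0 : (0 : ℝ) < α := by linarith
  have hαk' : α < (k : ℝ) := by nlinarith
  set c : ℝ := (⌈(k : ℝ) / α⌉ : ℝ) with hc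
  have hcge : (k : ℝ) / α ≤ c := Int.le_ceil _
  have hclt : c < (k : ℝ) / α + 1 := Int.ceil_lt_add_one _
  have hka1 : (1 : ℝ) < (k : ℝ) / α := by
    rw [lt_div_iff₀ hα0]; nlinarith
  have hc1 : (1 : ℝ) < c := lt_of_lt_of_le hka1 hcge
  have hcle : c ≤ (k : ℝ) := by
    have h : (⌈(k : ℝ) / α⌉ : ℤ) ≤ (k : ℤ) := by
      apply Int.ceil_le.2
      push_cast
      rw [div_le_iff₀ hα0]; nlinarith
    rw [hc]; exact_mod_cast h
  clear_value c
  have hb0 : (0 : ℝ) < 1 + α / k := by positivity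
  set L : ℝ := Real.log (1 + α / k) with hL
  clear_value L
  have hL0 : 0 ≤ L := by
    rw [hL]; exact Real.log_nonneg (by nlinarith [div_nonneg hα0.le hk0.le])
  have hρ0 : (0 : ℝ) < ρ := by linarith
  -- take logs of heq
  have hlog : Real.log ρ = ((k : ℝ) - c) * L + Real.log (α * c / k) := by
    rw [← heq]
    rw [Real.log_mul (ne_of_gt (by positivity)) (ne_of_gt (by linarith)),
      Real.log_mul (ne_of_gt (Real.rpow_pos_of_pos hb0 _)) (ne_of_gt (by positivity)),
      Real.log_rpow hb0, ← hL]
    have h5 : α * c / k = α / k * c := by ring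
    rw [h5, Real.log_mul (ne_of_gt (by positivity)) (ne_of_gt (by linarith))]
    ring
  have hac1 : (1 : ℝ) ≤ α * c / k := by
    rw [le_div_iff₀ hk0]
    calc (1 : ℝ) * k = α * ((k:ℝ)/α) := by field_simp
    _ ≤ α * c := by nlinarith
  constructor
  · -- lower bound: log ρ ≤ α - 1
    have h1 : L ≤ α / k := by
      have := Real.log_le_sub_one_of_pos hb0
      linarith
    have h2 : Real.log (α * c / k) ≤ α * c / k - 1 :=
      Real.log_le_sub_one_of_pos (by positivity)
    have h3 : ((k : ℝ) - c) * L ≤ ((k : ℝ) - c) * (α / k) :=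
      mul_le_mul_of_nonneg_left h1 (by linarith)
    have : Real.log ρ ≤ ((k : ℝ) - c) * (α / k) + (α * c / k - 1) := by
      rw [hlog]; linarith
    have harith : ((k : ℝ) - c) * (α / k) + (α * c / k - 1) = α - 1 := by
      field_simp; ring
    linarith
  · -- upper bound: log ρ ≥ α - 1 + log (1 - α²/k)
    set δ : ℝ := c - (k : ℝ) / α with hδ
    clear_value δ
    have hδ0 : 0 ≤ δ := by simp [hδ]; linarith
    have hδ1 : δ ≤ 1 := by simp [hδ]; linarith
    -- Bernoulli: (1 + α/k)^δ ≤ 1 + δ * (α/k)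
    have hbern : (1 + α / k) ^ δ ≤ 1 + δ * (α / k) :=
      rpow_one_add_le_one_add_mul_self (by nlinarith [div_nonneg hα0.le hk0.le]) hδ0 hδ1
    have hstep1 : δ * L ≤ Real.log (α * c / k) := by
      have heqc : α * c / k = 1 + δ * (α / k) := by
        rw [hδ]; field_simp; ring
      rw [heqc]
      calc δ * L = Real.log ((1 + α / k) ^ δ) := by rw [Real.log_rpow hb0, hL]
      _ ≤ Real.log (1 + δ * (α / k)) := Real.log_le_log (by positivity) hbern
    -- so log ρ ≥ (k - k/α) * L
    have hstep2 : ((k : ℝ) - (k : ℝ) / α) * L ≤ Real.log ρ := by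
      rw [hlog]
      have : ((k : ℝ) - (k : ℝ) / α) * L = ((k : ℝ) - c) * L + δ * L := by
        rw [hδ]; ring
      rw [this]
      linarith
    -- L ≥ (α/k)/(1 + α/k)
    have hLlb : (α / k) / (1 + α / k) ≤ L := by
      have h := Real.log_le_sub_one_of_pos (x := (1 + α / k)⁻¹) (by positivity)
      rw [Real.log_inv] at h
      have : (α / k) / (1 + α / k) = 1 - (1 + α / k)⁻¹ := by
        field_simp
        ring
      rw [this]; linarith
    have hαkk : (0 : ℝ) < 1 - α ^ 2 / k := by
      rw [sub_pos, div_lt_one hk0]; exact hαk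
    have hlog2 : Real.log (1 - α ^ 2 / k) ≤ -(α ^ 2 / k) := by
      have := Real.log_le_sub_one_of_pos hαkk
      linarith
    -- arithmetic: (k - k/α) * ((α/k)/(1+α/k)) ≥ α - 1 - α²/k
    have harith : α - 1 - α ^ 2 / k ≤ ((k : ℝ) - (k : ℝ) / α) * ((α / k) / (1 + α / k)) :=
      stmt_6_aux k α hk0 hα0 hα hαk
    have hmul : ((k : ℝ) - (k : ℝ) / α) * ((α / k) / (1 + α / k))
        ≤ ((k : ℝ) - (k : ℝ) / α) * L := by
      apply mul_le_mul_of_nonneg_left hLlb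
      have h7 : (k : ℝ) / α ≤ k := by
        rw [div_le_iff₀ hα0]; exact le_mul_of_one_le_right hk0.le hα
      linarith
    have : α - 1 + Real.log (1 - α ^ 2 / k) ≤ Real.log ρ := by
      calc α - 1 + Real.log (1 - α ^ 2 / k) ≤ α - 1 - α ^ 2 / k := by linarith
      _ ≤ ((k : ℝ) - (k : ℝ) / α) * ((α / k) / (1 + α / k)) := harith
      _ ≤ ((k : ℝ) - (k : ℝ) / α) * L := hmul
      _ ≤ Real.log ρ := hstep2
    linarith
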